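/- (Real-number form of the ground-space structure of Ambainis's query Hamiltonian) Fix an integer m ≥ 1 and ε > 0, and for each i ∈ {1,…,m} and each prefix y₁⋯y_{i−1} ∈ {0,1}^{i−1} let g(i, y₁⋯y_{i−1}) ≥ 0 be a nonnegative real. Then at least one correct query string exists, and, letting λ denote the minimum of λ_x over all correct query strings x ∈ {0,1}^m, every incorrect query string y ∈ {0,1}^m satisfies λ_y ≥ λ + ε/4^m. -/

import Mathlib

/-- The prefix `y₁⋯y_{i−1}` of a query string `y` (here zero-indexed). -/
def prefixOf {m : ℕ} (y : Fin m → Bool) (i : Fin m) : Fin i → Bool :=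
  fun j => y ⟨j, j.isLt.trans i.isLt⟩

/-- The block energy `λ_y = Σ_{i=1}^m 4^{−(i−1)} c_i(y)`, where `c_i(y) = 2ε` if `y_i = 0`
and `c_i(y) = g(i, y₁⋯y_{i−1})` if `y_i = 1`. -/
noncomputable def blockEnergy (m : ℕ) (ε : ℝ)
    (g : (i : Fin m) → (Fin i → Bool) → ℝ) (y : Fin m → Bool) : ℝ :=
  ∑ i : Fin m, ((4 : ℝ)⁻¹) ^ (i : ℕ) * (if y i then g i (prefixOf y i) else 2 * ε)

/-- `y` is a correct query string: `g(i, y₁⋯y_{i−1}) ≤ ε` forces `y_i = 1`, and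
`g(i, y₁⋯y_{i−1}) ≥ 3ε` forces `y_i = 0`. -/
def CorrectQueryString (m : ℕ) (ε : ℝ)
    (g : (i : Fin m) → (Fin i → Bool) → ℝ) (y : Fin m → Bool) : Prop :=
  ∀ i : Fin m,
    (g i (prefixOf y i) ≤ ε → y i = true) ∧ (3 * ε ≤ g i (prefixOf y i) → y i = false)

open Classical in
/-- Extension of `y` that keeps `y` below index `i₀` and is greedy from `i₀` on. -/
noncomputable def greedyExt (m : ℕ) (ε : ℝ) (g : (i : Fin m) → (Fin i → Bool) → ℝ)
    (y : Fin m → Bool) (i₀ : ℕ) (i : Fin m) : Bool :=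
  if (i : ℕ) < i₀ then y i
  else decide (g i (fun j => greedyExt m ε g y i₀ ⟨j, j.isLt.trans i.isLt⟩) ≤ 2 * ε)
termination_by i.val
decreasing_by all_goals exact j.isLt

open Classical in
lemma greedyExt_eq (m : ℕ) (ε : ℝ) (g : (i : Fin m) → (Fin i → Bool) → ℝ)
    (y : Fin m → Bool) (i₀ : ℕ) (i : Fin m) :
    greedyExt m ε g y i₀ i =
      if (i : ℕ) < i₀ then y i
      else decide (g i (prefixOf (greedyExt m ε g y i₀) i) ≤ 2 * ε) := by
  rw [greedyExt]; rfl

lemma greedyExt_lt (m : ℕ) (ε : ℝ) (g : (i : Fin m) → (Fin i → Bool) → ℝ)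
    (y : Fin m → Bool) (i₀ : ℕ) (i : Fin m) (h : (i : ℕ) < i₀) :
    greedyExt m ε g y i₀ i = y i := by
  rw [greedyExt_eq, if_pos h]

lemma greedyExt_prefix (m : ℕ) (ε : ℝ) (g : (i : Fin m) → (Fin i → Bool) → ℝ)
    (y : Fin m → Bool) (i₀ : ℕ) (i : Fin m) (h : (i : ℕ) ≤ i₀) :
    prefixOf (greedyExt m ε g y i₀) i = prefixOf y i := by
  funext j
  exact greedyExt_lt m ε g y i₀ _ (lt_of_lt_of_le j.isLt h)

open Classical in
lemma greedyExt_ge (m : ℕ) (ε : ℝ) (g : (i : Fin m) → (Fin i → Bool) → ℝ)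
    (y : Fin m → Bool) (i₀ : ℕ) (i : Fin m) (h : ¬ (i : ℕ) < i₀) :
    greedyExt m ε g y i₀ i
      = decide (g i (prefixOf (greedyExt m ε g y i₀) i) ≤ 2 * ε) := by
  rw [greedyExt_eq, if_neg h]

lemma greedyExt_cost (m : ℕ) (ε : ℝ) (hε : 0 < ε) (g : (i : Fin m) → (Fin i → Bool) → ℝ)
    (y : Fin m → Bool) (i₀ : ℕ) (i : Fin m) (h : ¬ (i : ℕ) < i₀) :
    (if greedyExt m ε g y i₀ i then g i (prefixOf (greedyExt m ε g y i₀) i) else 2 * ε)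
      ≤ 2 * ε := by
  by_cases hz : greedyExt m ε g y i₀ i
  · rw [if_pos hz]
    have := greedyExt_ge m ε g y i₀ i h
    rw [hz] at this
    exact of_decide_eq_true this.symm
  · rw [if_neg hz]

lemma greedyExt_correct (m : ℕ) (ε : ℝ) (hε : 0 < ε)
    (g : (i : Fin m) → (Fin i → Bool) → ℝ) (y : Fin m → Bool) (i₀ : ℕ)
    (hy : ∀ j : Fin m, (j : ℕ) < i₀ →
      ((g j (prefixOf y j) ≤ ε → y j = true) ∧ (3 * ε ≤ g j (prefixOf y j) → y j = false))) :
    CorrectQueryString m ε g (greedyExt m ε g y i₀) := by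
  intro i
  by_cases h : (i : ℕ) < i₀
  · rw [greedyExt_lt m ε g y i₀ i h, greedyExt_prefix m ε g y i₀ i (le_of_lt h)]
    exact hy i h
  · rw [greedyExt_ge m ε g y i₀ i h]
    constructor
    · intro hle
      simp only [decide_eq_true_eq]
      linarith
    · intro hge
      simp only [decide_eq_false_iff_not]
      intro hcon
      linarith

lemma geom_tail (i₀ n : ℕ) :
    ∑ k ∈ Finset.Ico (i₀ + 1) n, ((4 : ℝ)⁻¹) ^ k ≤ ((4 : ℝ)⁻¹) ^ i₀ / 3 := by
  rw [Finset.sum_Ico_eq_sum_range]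
  have hgeom : ∑ k ∈ Finset.range (n - (i₀ + 1)), ((4 : ℝ)⁻¹) ^ k ≤ 4 / 3 := by
    rw [geom_sum_eq (by norm_num : (4 : ℝ)⁻¹ ≠ 1)]
    rw [div_le_iff_of_neg (by norm_num : (4 : ℝ)⁻¹ - 1 < 0)]
    have : (0 : ℝ) ≤ (4 : ℝ)⁻¹ ^ (n - (i₀ + 1)) := by positivity
    nlinarith
  calc ∑ k ∈ Finset.range (n - (i₀ + 1)), ((4 : ℝ)⁻¹) ^ (i₀ + 1 + k)
      = ((4 : ℝ)⁻¹) ^ (i₀ + 1) * ∑ k ∈ Finset.range (n - (i₀ + 1)), ((4 : ℝ)⁻¹) ^ k := by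
        rw [Finset.mul_sum]
        exact Finset.sum_congr rfl fun k _ => by rw [pow_add]
    _ ≤ ((4 : ℝ)⁻¹) ^ (i₀ + 1) * (4 / 3) := by
        apply mul_le_mul_of_nonneg_left hgeom (by positivity)
    _ = ((4 : ℝ)⁻¹) ^ i₀ / 3 := by
        rw [pow_succ]; ring

theorem ambainis_query_hamiltonian_ground_space (m : ℕ) (hm : 1 ≤ m) (ε : ℝ) (hε : 0 < ε)
    (g : (i : Fin m) → (Fin i → Bool) → ℝ) (hg : ∀ i w, 0 ≤ g i w) :
    ∃ x : Fin m → Bool, CorrectQueryString m ε g x ∧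
      (∀ x' : Fin m → Bool, CorrectQueryString m ε g x' →
        blockEnergy m ε g x ≤ blockEnergy m ε g x') ∧
      ∀ y : Fin m → Bool, ¬ CorrectQueryString m ε g y →
        blockEnergy m ε g x + ε / 4 ^ m ≤ blockEnergy m ε g y := by
  classical
  have hcor0 : CorrectQueryString m ε g (greedyExt m ε g (fun _ => false) 0) :=
    greedyExt_correct m ε hε g (fun _ => false) 0 (fun j hj => absurd hj (Nat.not_lt_zero _))
  obtain ⟨x, hxmem, hxmin⟩ := Finset.exists_min_image
      (Finset.univ.filter fun w => CorrectQueryString m ε g w) (blockEnergy m ε g)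
      ⟨_, Finset.mem_filter.2 ⟨Finset.mem_univ _, hcor0⟩⟩
  have hxcor : CorrectQueryString m ε g x := (Finset.mem_filter.1 hxmem).2
  refine ⟨x, hxcor, fun x' hx' => hxmin x' (Finset.mem_filter.2 ⟨Finset.mem_univ _, hx'⟩), ?_⟩
  intro y hy
  -- a violated index exists
  have hex : ∃ i : Fin m, (g i (prefixOf y i) ≤ ε ∧ y i = false) ∨
      (3 * ε ≤ g i (prefixOf y i) ∧ y i = true) := by
    by_contra hc
    push_neg at hc
    apply hy
    intro i
    obtain ⟨h1, h2⟩ := hc i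
    exact ⟨fun h => by simpa using h1 h, fun h => by simpa using h2 h⟩
  have hPex : ∃ n : ℕ, ∃ h : n < m,
      (g ⟨n, h⟩ (prefixOf y ⟨n, h⟩) ≤ ε ∧ y ⟨n, h⟩ = false) ∨
      (3 * ε ≤ g ⟨n, h⟩ (prefixOf y ⟨n, h⟩) ∧ y ⟨n, h⟩ = true) := by
    obtain ⟨i, hi⟩ := hex
    exact ⟨i.val, i.isLt, hi⟩
  set i0 := Nat.find hPex with hi0def
  obtain ⟨hi0m, hVi0⟩ := Nat.find_spec hPex
  have hmin : ∀ j : Fin m, (j : ℕ) < i0 →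
      ((g j (prefixOf y j) ≤ ε → y j = true) ∧ (3 * ε ≤ g j (prefixOf y j) → y j = false)) := by
    intro j hj
    have hnV := Nat.find_min hPex hj
    constructor
    · intro hle
      cases hyj : y j with
      | false => exact absurd ⟨j.isLt, Or.inl ⟨hle, hyj⟩⟩ hnV
      | true => rfl
    · intro hge
      cases hyj : y j with
      | false => rfl
      | true => exact absurd ⟨j.isLt, Or.inr ⟨hge, hyj⟩⟩ hnV
  set z := greedyExt m ε g y i0 with hzdef
  have hzcor : CorrectQueryString m ε g z := greedyExt_correct m ε hε g y i0 hmin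
  have hxz : blockEnergy m ε g x ≤ blockEnergy m ε g z :=
    hxmin z (Finset.mem_filter.2 ⟨Finset.mem_univ _, hzcor⟩)
  have hkey : blockEnergy m ε g z + ε / 4 ^ m ≤ blockEnergy m ε g y := by
    set E : ℕ → ℝ := fun n =>
      if h : n < m then ((4 : ℝ)⁻¹) ^ n *
        ((if y ⟨n, h⟩ then g ⟨n, h⟩ (prefixOf y ⟨n, h⟩) else 2 * ε)
          - (if z ⟨n, h⟩ then g ⟨n, h⟩ (prefixOf z ⟨n, h⟩) else 2 * ε))
      else 0 with hE
    have hsub : ∑ n ∈ Finset.range m, E n = blockEnergy m ε g y - blockEnergy m ε g z := by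
      rw [← Fin.sum_univ_eq_sum_range E m, blockEnergy, blockEnergy, ← Finset.sum_sub_distrib]
      refine Finset.sum_congr rfl fun i _ => ?_
      simp only [hE, dif_pos i.isLt, Fin.eta]
      ring
    have hsplit : ∑ n ∈ Finset.range m, E n
        = ∑ n ∈ Finset.range i0, E n + ∑ n ∈ Finset.Ico i0 m, E n :=
      (Finset.sum_range_add_sum_Ico E (le_of_lt hi0m)).symm
    have hhead : ∑ n ∈ Finset.range i0, E n = 0 := by
      apply Finset.sum_eq_zero
      intro n hn
      have hn' : n < i0 := Finset.mem_range.1 hn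
      have hnm : n < m := hn'.trans hi0m
      rw [hE]
      simp only [dif_pos hnm]
      rw [hzdef, greedyExt_lt m ε g y i0 ⟨n, hnm⟩ hn',
        greedyExt_prefix m ε g y i0 ⟨n, hnm⟩ (le_of_lt hn')]
      ring
    have hIco : ∑ n ∈ Finset.Ico i0 m, E n = E i0 + ∑ n ∈ Finset.Ico (i0 + 1) m, E n :=
      Finset.sum_eq_sum_Ico_succ_bot hi0m E
    have hEi0 : ε * ((4 : ℝ)⁻¹) ^ i0 ≤ E i0 := by
      rw [hE]
      simp only [dif_pos (show i0 < m from hi0m)]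
      have hzi0 : z ⟨i0, hi0m⟩
          = decide (g ⟨i0, hi0m⟩ (prefixOf y ⟨i0, hi0m⟩) ≤ 2 * ε) := by
        rw [hzdef, greedyExt_ge m ε g y i0 ⟨i0, hi0m⟩ (lt_irrefl i0),
          greedyExt_prefix m ε g y i0 ⟨i0, hi0m⟩ (le_refl i0)]
      have hpz : prefixOf z ⟨i0, hi0m⟩ = prefixOf y ⟨i0, hi0m⟩ := by
        rw [hzdef]; exact greedyExt_prefix m ε g y i0 ⟨i0, hi0m⟩ (le_refl i0)
      have hcost : ε ≤ (if y ⟨i0, hi0m⟩ then g ⟨i0, hi0m⟩ (prefixOf y ⟨i0, hi0m⟩) else 2 * ε)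
          - (if z ⟨i0, hi0m⟩ then g ⟨i0, hi0m⟩ (prefixOf z ⟨i0, hi0m⟩) else 2 * ε) := by
        rcases hVi0 with ⟨hle, hf⟩ | ⟨hge, ht⟩
        · rw [hf, hzi0, decide_eq_true (by linarith : g ⟨i0, hi0m⟩ (prefixOf y ⟨i0, hi0m⟩) ≤ 2 * ε)]
          simp only [if_true, if_false, Bool.false_eq_true, ite_true, ite_false]
          rw [hpz]
          linarith
        · rw [ht, hzi0, decide_eq_false (by intro hcon; linarith :
            ¬ g ⟨i0, hi0m⟩ (prefixOf y ⟨i0, hi0m⟩) ≤ 2 * ε)]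
          simp only [ite_true, Bool.false_eq_true, ite_false]
          linarith
      have hp : (0 : ℝ) < ((4 : ℝ)⁻¹) ^ i0 := by positivity
      nlinarith
    have htail : -(2 * ε) * (((4 : ℝ)⁻¹) ^ i0 / 3) ≤ ∑ n ∈ Finset.Ico (i0 + 1) m, E n := by
      have h1 : ∀ n ∈ Finset.Ico (i0 + 1) m, -(2 * ε) * ((4 : ℝ)⁻¹) ^ n ≤ E n := by
        intro n hn
        obtain ⟨hn1, hn2⟩ := Finset.mem_Ico.1 hn
        rw [hE]
        simp only [dif_pos hn2]
        have hcy : (0 : ℝ) ≤ (if y ⟨n, hn2⟩ then g ⟨n, hn2⟩ (prefixOf y ⟨n, hn2⟩) else 2 * ε) := by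
          split
          · exact hg _ _
          · linarith
        have hcz : (if z ⟨n, hn2⟩ then g ⟨n, hn2⟩ (prefixOf z ⟨n, hn2⟩) else 2 * ε) ≤ 2 * ε := by
          rw [hzdef]
          exact greedyExt_cost m ε hε g y i0 ⟨n, hn2⟩ (show ¬ n < i0 by omega)
        have hp : (0 : ℝ) ≤ ((4 : ℝ)⁻¹) ^ n := by positivity
        nlinarith
      calc -(2 * ε) * (((4 : ℝ)⁻¹) ^ i0 / 3)
          ≤ -(2 * ε) * ∑ n ∈ Finset.Ico (i0 + 1) m, ((4 : ℝ)⁻¹) ^ n := by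
            apply mul_le_mul_of_nonpos_left (geom_tail i0 m) (by linarith)
        _ = ∑ n ∈ Finset.Ico (i0 + 1) m, -(2 * ε) * ((4 : ℝ)⁻¹) ^ n := Finset.mul_sum _ _ _
        _ ≤ ∑ n ∈ Finset.Ico (i0 + 1) m, E n := Finset.sum_le_sum h1
    have hfinal : ε / 4 ^ m ≤ (ε / 3) * ((4 : ℝ)⁻¹) ^ i0 := by
      have h5 : (0 : ℝ) < (4 : ℝ) ^ i0 := by positivity
      have h4 : (0 : ℝ) < (4 : ℝ) ^ m := by positivity
      have h1 : (4 : ℝ) ^ i0 ≤ 4 ^ (m - 1) :=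
        pow_le_pow_right₀ (by norm_num) (by omega)
      have h2 : (4 : ℝ) ^ m = 4 * 4 ^ (m - 1) := by
        rw [← pow_succ']
        congr 1
        omega
      have h3 : (3 : ℝ) * 4 ^ i0 ≤ 4 ^ m := by nlinarith
      rw [inv_pow, div_le_iff₀ h4]
      have h6 : (3 : ℝ) ≤ (4 : ℝ) ^ m * ((4 : ℝ) ^ i0)⁻¹ := by
        rw [← div_eq_mul_inv, le_div_iff₀ h5]; linarith
      have h7 := mul_le_mul_of_nonneg_left h6 (by positivity : (0 : ℝ) ≤ ε / 3)
      calc ε = ε / 3 * 3 := by ring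
        _ ≤ ε / 3 * ((4 : ℝ) ^ m * ((4 : ℝ) ^ i0)⁻¹) := h7
        _ = ε / 3 * ((4 : ℝ) ^ i0)⁻¹ * (4 : ℝ) ^ m := by ring
    have hdiff : ε / 4 ^ m ≤ blockEnergy m ε g y - blockEnergy m ε g z := by
      rw [← hsub, hsplit, hhead, hIco]
      linarith [hEi0, htail, hfinal]
    linarith [hdiff]
  linarith [hxz, hkey]
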